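/- For every ε > 0 there exists N > 0 such that for all x > γ/β and y > 0 with x + y ≥ N, the SIR solution S, I with initial data (x, y) satisfies |β (x − γ/β + y) v(x, y) / ln[(x/(γ/β)) ((x − γ/β)/y + 1)] − 1| ≤ ε. That is, β (x − γ/β + y) v(x, y) / ln[(x/(γ/β)) ((x − γ/β)/y + 1)] → 1 as x + y → ∞ with x > γ/β and y > 0. -/

import Mathlib

open Set Filter Topology MeasureTheory intervalIntegral

/-- An SIR solution with parameters β, γ and initial data (x, y):
differentiable functions S, I on [0,∞) with S' = -βSI, I' = βSI - γI,
S(0) = x, I(0) = y. -/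
def IsSIRSolution (β γ x y : ℝ) (S I : ℝ → ℝ) : Prop :=
  S 0 = x ∧ I 0 = y ∧
  ∀ t, 0 ≤ t →
    HasDerivWithinAt S (-(β * S t * I t)) (Set.Ici 0) t ∧
    HasDerivWithinAt I (β * S t * I t - γ * I t) (Set.Ici 0) t

private lemma mono_aux {f g : ℝ → ℝ} {b : ℝ} (hb : 0 ≤ b)
    (hc : ContinuousOn f (Icc 0 b))
    (hd : ∀ t ∈ Ioo (0:ℝ) b, HasDerivAt f (g t) t)
    (h0 : ∀ t ∈ Ioo (0:ℝ) b, 0 ≤ g t) : f 0 ≤ f b := by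
  have hmono : MonotoneOn f (Icc 0 b) := by
    apply monotoneOn_of_deriv_nonneg (convex_Icc 0 b) hc
    · intro t ht
      rw [interior_Icc] at ht
      exact ((hd t ht).differentiableAt).differentiableWithinAt
    · intro t ht
      rw [interior_Icc] at ht
      rw [(hd t ht).deriv]
      exact h0 t ht
  exact hmono (left_mem_Icc.2 hb) (right_mem_Icc.2 hb) hb

private lemma const_aux {f : ℝ → ℝ} {b : ℝ} (hb : 0 ≤ b)
    (hc : ContinuousOn f (Icc 0 b))
    (hd : ∀ t ∈ Ioo (0:ℝ) b, HasDerivAt f 0 t) : f b = f 0 := by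
  have h1 : f 0 ≤ f b := mono_aux hb hc hd (fun t _ => le_rfl)
  have h2 : (fun t => -f t) 0 ≤ (fun t => -f t) b := by
    apply mono_aux hb hc.neg (g := fun _ => 0) _ (fun t _ => le_rfl)
    intro t ht
    simpa using (hd t ht).neg
  simp only [neg_le_neg_iff] at h2
  linarith


private lemma sir_I_pos {β γ y : ℝ} {S I : ℝ → ℝ} (hy : 0 < y) (hI0 : I 0 = y)
    (hScont : ContinuousOn S (Ici 0)) (hSAtc : ∀ t, 0 < t → ContinuousAt S t)
    (hIcont : ContinuousOn I (Ici 0))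
    (hIAt : ∀ t, 0 < t → HasDerivAt I (β * S t * I t - γ * I t) t) :
    ∀ t, 0 ≤ t → 0 < I t := by
  set f : ℝ → ℝ := fun u => β * S u - γ with hfdef
  have hfcont : ContinuousOn f (Ici 0) :=
    (continuousOn_const.mul hScont).sub continuousOn_const
  have hfAt : ∀ t, 0 < t → ContinuousAt f t := by
    intro t ht
    exact (continuousAt_const.mul (hSAtc t ht)).sub continuousAt_const
  set F : ℝ → ℝ := fun t => ∫ u in (0:ℝ)..t, f u with hFdef
  have hFint : ∀ t, 0 ≤ t → IntervalIntegrable f MeasureTheory.volume 0 t := by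
    intro t ht
    apply ContinuousOn.intervalIntegrable
    rw [uIcc_of_le ht]
    exact hfcont.mono (fun u hu => hu.1)
  have hFAt : ∀ t, 0 < t → HasDerivAt F (f t) t := by
    intro t ht
    refine intervalIntegral.integral_hasDerivAt_right (hFint t ht.le) ?_ (hfAt t ht)
    exact ContinuousAt.stronglyMeasurableAtFilter isOpen_Ioi
      (fun u hu => hfAt u hu) t ht
  have hF0 : ContinuousWithinAt F (Ici 0) 0 := by
    have : HasDerivWithinAt F (f 0) (Ici 0) 0 := by
      apply intervalIntegral.integral_hasDerivWithinAt_right (t := Ioi 0) (hFint 0 le_rfl)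
        ⟨Ici 0, mem_of_superset self_mem_nhdsWithin Ioi_subset_Ici_self,
          hfcont.aestronglyMeasurable measurableSet_Ici⟩
      exact (hfcont 0 (mem_Ici.2 le_rfl)).mono Ioi_subset_Ici_self
    exact this.continuousWithinAt
  have hFcont : ContinuousOn F (Ici 0) := by
    intro t ht
    rcases eq_or_lt_of_le (mem_Ici.1 ht) with h | h
    · exact h ▸ hF0
    · exact ((hFAt t h).continuousAt).continuousWithinAt
  intro b hb
  have hconst : I b * Real.exp (-F b) = I 0 * Real.exp (-F 0) := by
    refine const_aux (f := fun t => I t * Real.exp (-F t)) hb ?_ ?_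
    · exact (hIcont.mono (fun u hu => hu.1)).mul
        (Real.continuous_exp.comp_continuousOn
          ((hFcont.mono (fun u hu => hu.1)).neg))
    · intro t ht
      have h := (hIAt t ht.1).mul (((hFAt t ht.1).neg).exp)
      refine h.congr_deriv ?_
      simp only [hfdef]
      ring
  have hF0v : F 0 = 0 := intervalIntegral.integral_same
  rw [hI0, hF0v, neg_zero, Real.exp_zero, mul_one] at hconst
  have h3 : Real.exp (-F b) * Real.exp (F b) = 1 := by
    rw [← Real.exp_add]; simp
  have h2 : I b * (Real.exp (-F b) * Real.exp (F b)) = y * Real.exp (F b) := by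
    rw [← mul_assoc, hconst]
  rw [h3, mul_one] at h2
  rw [h2]
  positivity

set_option maxHeartbeats 1600000 in
theorem stmt_19 (β γ : ℝ) (hβ : 0 < β) (hγ : 0 < γ)
    (ε : ℝ) (hε : 0 < ε) :
    ∃ N : ℝ, 0 < N ∧
      ∀ x y : ℝ, γ / β < x → 0 < y → N ≤ x + y →
        ∀ S I : ℝ → ℝ, IsSIRSolution β γ x y S I →
          ∀ v : ℝ, IsLeast {t : ℝ | 0 ≤ t ∧ S t ≤ γ / β} v →
            |β * (x - γ / β + y) * v /
                Real.log ((x / (γ / β)) * ((x - γ / β) / y + 1)) - 1| ≤ ε := by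
  have hρ : 0 < γ / β := div_pos hγ hβ
  set ρ := γ / β with hρdef
  have hβρ : β * ρ = γ := by rw [hρdef]; field_simp
  set A : ℝ := 2 * Real.sqrt ρ with hAdef
  have hA0 : 0 ≤ A := by positivity
  set s₁ : ℝ := A + ρ + ρ / ε + 1 with hs₁def
  set s₂ : ℝ := ((1 + ε) * A + ε * ρ + ε) / ε with hs₂def
  set sN : ℝ := max 1 (max s₁ s₂) with hsNdef
  have hsN1 : (1:ℝ) ≤ sN := le_max_left _ _
  have hsN0 : (0:ℝ) ≤ sN := by linarith
  refine ⟨sN ^ 2, pow_pos (lt_of_lt_of_le one_pos hsN1) 2, ?_⟩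
  intro x y hx hy hn S I hSIR v hv
  obtain ⟨hS0, hI0, hderiv⟩ := hSIR
  obtain ⟨⟨hv0, hSv_le⟩, hvmin⟩ := hv
  have hx0 : 0 < x := lt_trans hρ hx
  -- quantitative setup
  set s : ℝ := Real.sqrt (x + y) with hsdef
  have hxy0 : (0:ℝ) ≤ x + y := le_trans (by positivity) hn
  have hsge : sN ≤ s := by
    rw [hsdef, ← Real.sqrt_sq hsN0]
    exact Real.sqrt_le_sqrt hn
  have hs1 : (1:ℝ) ≤ s := le_trans hsN1 hsge
  have hs0 : (0:ℝ) ≤ s := by linarith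
  have hn_eq : x + y = s * s := (Real.mul_self_sqrt hxy0).symm
  have hss1 : s₁ ≤ s := le_trans (le_trans (le_max_left _ _) (le_max_right _ _)) hsge
  have hss2 : s₂ ≤ s := le_trans (le_trans (le_max_right _ _) (le_max_right _ _)) hsge
  clear_value ρ A s₁ s₂ sN s
  have key1 : ρ / ε ≤ x + y - ρ - A * s := by
    have hss1' : A + ρ + ρ / ε + 1 ≤ s := by rw [← hs₁def]; exact hss1
    have h1 : (A + ρ + ρ / ε + 1) * s ≤ s * s := mul_le_mul_of_nonneg_right hss1' hs0
    have h2 : (ρ + ρ / ε + 1) * 1 ≤ (ρ + ρ / ε + 1) * s :=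
      mul_le_mul_of_nonneg_left hs1 (by have := div_pos hρ hε; linarith)
    linarith [hn_eq, h1, h2]
  have key2 : (1 + ε) * (A * s) ≤ ε * (x + y - ρ) := by
    have hes₂ : ε * s₂ = (1 + ε) * A + ε * ρ + ε := by rw [hs₂def]; field_simp
    have h0 : ε * s₂ ≤ ε * s := mul_le_mul_of_nonneg_left hss2 hε.le
    have h1 : (ε * s₂) * s ≤ (ε * s) * s := mul_le_mul_of_nonneg_right h0 hs0
    have h2 : (ε * ρ + ε) * 1 ≤ (ε * ρ + ε) * s :=
      mul_le_mul_of_nonneg_left hs1 (by have := mul_pos hε hρ; linarith)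
    rw [hes₂] at h1
    have hn_eq' : ε * (x + y) = ε * (s * s) := by rw [hn_eq]
    linarith [hn_eq', h1, h2]
  -- basic derivative facts
  have hSd : ∀ t, 0 ≤ t → HasDerivWithinAt S (-(β * S t * I t)) (Ici 0) t :=
    fun t ht => (hderiv t ht).1
  have hId : ∀ t, 0 ≤ t → HasDerivWithinAt I (β * S t * I t - γ * I t) (Ici 0) t :=
    fun t ht => (hderiv t ht).2
  have hSAt : ∀ t, 0 < t → HasDerivAt S (-(β * S t * I t)) t :=
    fun t ht => (hSd t ht.le).hasDerivAt (Ici_mem_nhds ht)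
  have hIAt : ∀ t, 0 < t → HasDerivAt I (β * S t * I t - γ * I t) t :=
    fun t ht => (hId t ht.le).hasDerivAt (Ici_mem_nhds ht)
  have hScont : ContinuousOn S (Ici 0) := by
    intro t ht
    rcases eq_or_lt_of_le (mem_Ici.1 ht) with h | h
    · exact h ▸ (hSd 0 le_rfl).continuousWithinAt
    · exact ((hSAt t h).continuousAt).continuousWithinAt
  have hIcont : ContinuousOn I (Ici 0) := by
    intro t ht
    rcases eq_or_lt_of_le (mem_Ici.1 ht) with h | h
    · exact h ▸ (hId 0 le_rfl).continuousWithinAt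
    · exact ((hIAt t h).continuousAt).continuousWithinAt
  -- v > 0
  have hvpos : 0 < v := by
    rcases eq_or_lt_of_le hv0 with h | h
    · exfalso; rw [← h, hS0] at hSv_le; linarith
    · exact h
  have hSlt : ∀ t, 0 ≤ t → t < v → ρ < S t := by
    intro t ht htv
    by_contra h
    exact absurd (hvmin ⟨ht, le_of_not_gt h⟩) (not_le.2 htv)
  -- S v = ρ
  have hSv_ge : ρ ≤ S v := by
    have h1 : Tendsto S (𝓝[Ioo 0 v] v) (𝓝 (S v)) :=
      (hScont v hv0).mono_left (nhdsWithin_mono v (fun t ht => le_of_lt ht.1))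
    haveI := right_nhdsWithin_Ioo_neBot hvpos
    exact ge_of_tendsto h1 (eventually_nhdsWithin_of_forall
      (fun t ht => (hSlt t ht.1.le ht.2).le))
  have hSv : S v = ρ := le_antisymm hSv_le hSv_ge
  have hSge : ∀ t ∈ Icc (0:ℝ) v, ρ ≤ S t := by
    intro t ht
    rcases eq_or_lt_of_le ht.2 with h | h
    · rw [h]; exact hSv_ge
    · exact (hSlt t ht.1 h).le
  -- positivity of I
  have hIpos : ∀ t, 0 ≤ t → 0 < I t :=
    sir_I_pos hy hI0 hScont (fun t ht => (hSAt t ht).continuousAt) hIcont hIAt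
  -- S t ≤ x on [0, v]
  have hSle : ∀ t ∈ Icc (0:ℝ) v, S t ≤ x := by
    intro b hb
    have h : (fun u => x - S u) 0 ≤ (fun u => x - S u) b := by
      refine mono_aux (f := fun u => x - S u) (g := fun u => β * S u * I u) hb.1 ?_ ?_ ?_
      · exact continuousOn_const.sub (hScont.mono (fun u hu => hu.1))
      · intro t ht
        have h := HasDerivAt.const_sub x (hSAt t ht.1)
        refine h.congr_deriv ?_
        ring
      · intro t ht
        have h1 : ρ ≤ S t := hSge t ⟨ht.1.le, le_trans ht.2.le hb.2⟩
        have h2 : 0 < I t := hIpos t ht.1.le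
        have h3 : 0 < S t := lt_of_lt_of_le hρ h1
        exact (mul_pos (mul_pos hβ h3) h2).le
    simp only [hS0] at h
    linarith
  -- conserved quantity H = S + I - ρ log S
  have hSne : ∀ t ∈ Icc (0:ℝ) v, S t ≠ 0 := fun t ht => (lt_of_lt_of_le hρ (hSge t ht)).ne'
  have hH : ∀ b ∈ Icc (0:ℝ) v,
      S b + I b - ρ * Real.log (S b) = x + y - ρ * Real.log x := by
    intro b hb
    have h : (fun t => S t + I t - ρ * Real.log (S t)) b
        = (fun t => S t + I t - ρ * Real.log (S t)) 0 := by
      refine const_aux (f := fun t => S t + I t - ρ * Real.log (S t)) hb.1 ?_ ?_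
      · refine ((hScont.mono (fun u hu => hu.1)).add
          (hIcont.mono (fun u hu => hu.1))).sub (continuousOn_const.mul ?_)
        apply ContinuousOn.log (hScont.mono (fun u hu => hu.1))
        intro u hu
        exact hSne u ⟨hu.1, le_trans hu.2 hb.2⟩
      · intro t ht
        have htv : t ∈ Icc (0:ℝ) v := ⟨ht.1.le, le_trans ht.2.le hb.2⟩
        have hne : S t ≠ 0 := hSne t htv
        have h := ((hSAt t ht.1).add (hIAt t ht.1)).sub
          (((hSAt t ht.1).log hne).const_mul ρ)
        have e2 : -(β * S t * I t) / S t = -(β * I t) := by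
          rw [div_eq_iff hne]; ring
        rw [e2] at h
        refine h.congr_deriv ?_
        linear_combination (I t) * hβρ
    simp only [hS0, hI0] at h
    exact h
  -- value of I at v
  set M : ℝ := ρ * (Real.log x - Real.log ρ) with hMdef
  set W : ℝ := x + y - ρ - M with hWdef
  have hIv : I v = W := by
    have h := hH v ⟨hv0, le_rfl⟩
    rw [hSv] at h
    rw [hWdef, hMdef]
    linarith
  have hWpos : 0 < W := hIv ▸ hIpos v hv0
  have hMpos : 0 < M := by
    have h := Real.log_lt_log hρ hx
    rw [hMdef]
    exact mul_pos hρ (by linarith)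
  have hM_le : M ≤ A * s := by
    have hxle : x ≤ x + y := by linarith
    have h1 : Real.log x ≤ Real.log (x + y) := Real.log_le_log hx0 hxle
    have hz : 0 < (x + y) / ρ := div_pos (by linarith) hρ
    have h2 : Real.log ((x + y) / ρ) = Real.log (x + y) - Real.log ρ :=
      Real.log_div (by positivity) hρ.ne'
    have h3 : Real.log ((x + y) / ρ) ≤ 2 * Real.sqrt ((x + y) / ρ) := by
      have h4 : Real.log (Real.sqrt ((x + y) / ρ)) ≤ Real.sqrt ((x + y) / ρ) - 1 :=
        Real.log_le_sub_one_of_pos (Real.sqrt_pos.2 hz)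
      have h5 : Real.log (Real.sqrt ((x + y) / ρ)) = Real.log ((x + y) / ρ) / 2 :=
        Real.log_sqrt hz.le
      linarith [Real.sqrt_nonneg ((x + y) / ρ)]
    have h6 : Real.sqrt ((x + y) / ρ) = s / Real.sqrt ρ := by
      rw [hsdef]; exact Real.sqrt_div hxy0 ρ
    have h7 : ρ * (2 * (s / Real.sqrt ρ)) = A * s := by
      rw [hAdef]
      rw [show ρ * (2 * (s / Real.sqrt ρ)) = 2 * (ρ / Real.sqrt ρ) * s by ring]
      rw [Real.div_sqrt]
    have h8 : ρ * Real.log ((x + y) / ρ) ≤ A * s := by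
      rw [← h7]
      apply mul_le_mul_of_nonneg_left _ hρ.le
      rw [← h6]; exact h3
    rw [hMdef]
    have h9 : ρ * (Real.log x - Real.log ρ) ≤ ρ * (Real.log (x + y) - Real.log ρ) := by
      apply mul_le_mul_of_nonneg_left _ hρ.le
      linarith
    rw [h2] at h8
    linarith
  -- bounds on G = log I - log S
  set c₂ : ℝ := β * (x + y - ρ) with hc₂def
  set c₁ : ℝ := c₂ - β * M with hc₁def
  have hGAt : ∀ t ∈ Ioo (0:ℝ) v,
      HasDerivAt (fun u => Real.log (I u) - Real.log (S u)) (β * (S t + I t) - γ) t := by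
    intro t ht
    have htv : t ∈ Icc (0:ℝ) v := ⟨ht.1.le, ht.2.le⟩
    have hSn : S t ≠ 0 := hSne t htv
    have hIn : I t ≠ 0 := (hIpos t ht.1.le).ne'
    have h := ((hIAt t ht.1).log hIn).sub ((hSAt t ht.1).log hSn)
    have e1 : (β * S t * I t - γ * I t) / I t = β * S t - γ := by
      rw [div_eq_iff hIn]; ring
    have e2 : -(β * S t * I t) / S t = -(β * I t) := by
      rw [div_eq_iff hSn]; ring
    rw [e1, e2] at h
    refine h.congr_deriv ?_
    ring
  have hGcont : ContinuousOn (fun u => Real.log (I u) - Real.log (S u)) (Icc 0 v) := by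
    refine ContinuousOn.sub (ContinuousOn.log (hIcont.mono (fun u hu => hu.1))
      (fun u hu => (hIpos u hu.1).ne')) (ContinuousOn.log (hScont.mono (fun u hu => hu.1))
      (fun u hu => hSne u hu))
  have hSIbound : ∀ t ∈ Ioo (0:ℝ) v,
      c₁ ≤ β * (S t + I t) - γ ∧ β * (S t + I t) - γ ≤ c₂ := by
    intro t ht
    have htv : t ∈ Icc (0:ℝ) v := ⟨ht.1.le, ht.2.le⟩
    have hSIt : S t + I t = x + y - ρ * (Real.log x - Real.log (S t)) := by
      have := hH t htv
      linarith
    have hl1 : Real.log (S t) ≤ Real.log x :=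
      Real.log_le_log (lt_of_lt_of_le hρ (hSge t htv)) (hSle t htv)
    have hl2 : Real.log ρ ≤ Real.log (S t) := Real.log_le_log hρ (hSge t htv)
    have hu : ρ * (Real.log x - Real.log (S t)) ≤ ρ * (Real.log x - Real.log ρ) :=
      mul_le_mul_of_nonneg_left (by linarith) hρ.le
    have hu' : β * (ρ * (Real.log x - Real.log (S t)))
        ≤ β * (ρ * (Real.log x - Real.log ρ)) := mul_le_mul_of_nonneg_left hu hβ.le
    have hu0 : 0 ≤ β * (ρ * (Real.log x - Real.log (S t))) := by
      have : (0:ℝ) ≤ ρ * (Real.log x - Real.log (S t)) :=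
        mul_nonneg hρ.le (by linarith)
      exact mul_nonneg hβ.le this
    have he : β * (S t + I t) - γ
        = β * (x + y) - β * (ρ * (Real.log x - Real.log (S t))) - γ := by
      rw [hSIt]; ring
    constructor
    · rw [hc₁def, hc₂def, hMdef, he]
      linarith [hβρ, hu']
    · rw [hc₂def, he]
      linarith [hβρ, hu0]
  -- lower bound: c₁ v ≤ G v - G 0
  have hlow : c₁ * v ≤ (Real.log (I v) - Real.log (S v)) - (Real.log y - Real.log x) := by
    have h : (fun t => (Real.log (I t) - Real.log (S t)) - c₁ * t) 0
        ≤ (fun t => (Real.log (I t) - Real.log (S t)) - c₁ * t) v := by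
      refine mono_aux (f := fun t => (Real.log (I t) - Real.log (S t)) - c₁ * t)
        (g := fun t => (β * (S t + I t) - γ) - c₁) hv0 ?_ ?_ ?_
      · exact hGcont.sub (continuousOn_const.mul continuousOn_id)
      · intro t ht
        have h := (hGAt t ht).sub ((hasDerivAt_id t).const_mul c₁)
        refine h.congr_deriv ?_
        ring
      · intro t ht
        show (0:ℝ) ≤ β * (S t + I t) - γ - c₁
        linarith [(hSIbound t ht).1]
    simp only [hS0, hI0, mul_zero, sub_zero] at h
    linarith
  have hhigh : (Real.log (I v) - Real.log (S v)) - (Real.log y - Real.log x) ≤ c₂ * v := by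
    have h : (fun t => c₂ * t - (Real.log (I t) - Real.log (S t))) 0
        ≤ (fun t => c₂ * t - (Real.log (I t) - Real.log (S t))) v := by
      refine mono_aux (f := fun t => c₂ * t - (Real.log (I t) - Real.log (S t)))
        (g := fun t => c₂ - (β * (S t + I t) - γ)) hv0 ?_ ?_ ?_
      · exact (continuousOn_const.mul continuousOn_id).sub hGcont
      · intro t ht
        have h := ((hasDerivAt_id t).const_mul c₂).sub (hGAt t ht)
        refine h.congr_deriv ?_
        ring
      · intro t ht
        show (0:ℝ) ≤ c₂ - (β * (S t + I t) - γ)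
        linarith [(hSIbound t ht).2]
    simp only [hS0, hI0, mul_zero, zero_sub] at h
    linarith
  -- the target log
  set L : ℝ := Real.log ((x / ρ) * ((x - ρ) / y + 1)) with hLdef
  have hP : 0 < x - ρ + y := by linarith
  have hLsplit : L = (Real.log x - Real.log ρ) + (Real.log (x - ρ + y) - Real.log y) := by
    have harg : (x / ρ) * ((x - ρ) / y + 1) = x * (x - ρ + y) / (ρ * y) := by
      rw [div_add_one hy.ne', div_mul_div_comm]
    rw [hLdef, harg, Real.log_div (mul_pos hx0 hP).ne' (mul_pos hρ hy).ne',
      Real.log_mul hx0.ne' hP.ne', Real.log_mul hρ.ne' hy.ne']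
    ring
  set δ : ℝ := Real.log (x - ρ + y) - Real.log W with hδdef
  have hWP : W ≤ x - ρ + y := by rw [hWdef]; linarith
  have hδ0 : 0 ≤ δ := by
    rw [hδdef]
    have := Real.log_le_log hWpos hWP
    linarith
  have hGV : (Real.log (I v) - Real.log (S v)) - (Real.log y - Real.log x) = L - δ := by
    rw [hIv, hSv, hLsplit, hδdef]
    ring
  rw [hGV] at hlow hhigh
  -- L > 0
  have hLge : Real.log x - Real.log ρ ≤ L := by
    rw [hLsplit]
    have h1 : Real.log y ≤ Real.log (x - ρ + y) := Real.log_le_log hy (by linarith)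
    linarith
  have hLpos : 0 < L := by
    have := Real.log_lt_log hρ hx
    linarith
  -- δ ≤ ε L
  have hδεL : δ ≤ ε * L := by
    have hδle : δ ≤ M / W := by
      have h1 : Real.log ((x - ρ + y) / W) ≤ (x - ρ + y) / W - 1 :=
        Real.log_le_sub_one_of_pos (by positivity)
      have h2 : Real.log ((x - ρ + y) / W) = Real.log (x - ρ + y) - Real.log W :=
        Real.log_div hP.ne' hWpos.ne'
      have h3 : (x - ρ + y) / W - 1 = M / W := by
        rw [div_sub_one hWpos.ne']
        congr 1
        rw [hWdef]; ring
      rw [hδdef, ← h2]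
      linarith
    have hδW : δ * W ≤ M := by
      rw [div_eq_mul_inv] at hδle
      calc δ * W ≤ (M * W⁻¹) * W := mul_le_mul_of_nonneg_right hδle hWpos.le
        _ = M := by field_simp
    have hMρL : M ≤ ρ * L := by
      have := mul_le_mul_of_nonneg_left hLge hρ.le
      rw [hMdef]
      linarith
    have hρεW : ρ ≤ ε * W := by
      have hWB : x + y - ρ - A * s ≤ W := by
        rw [hWdef]; linarith
      have h1 : ρ / ε ≤ W := by linarith
      calc ρ = ε * (ρ / ε) := by rw [mul_div_cancel₀ ρ hε.ne']
        _ ≤ ε * W := mul_le_mul_of_nonneg_left h1 hε.le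
    have h : δ * W ≤ (ε * L) * W := by
      have h5 : ρ * L ≤ (ε * W) * L := mul_le_mul_of_nonneg_right hρεW hLpos.le
      linarith [hδW, hMρL, h5]
    exact le_of_mul_le_mul_right h hWpos
  -- c₂ ≤ (1+ε) c₁
  have hc2c1 : c₂ ≤ (1 + ε) * c₁ := by
    rw [hc₁def, hc₂def]
    have h1 : β * M ≤ β * (A * s) := mul_le_mul_of_nonneg_left hM_le hβ.le
    have h2 : (1 + ε) * (β * M) ≤ (1 + ε) * (β * (A * s)) :=
      mul_le_mul_of_nonneg_left h1 (by linarith)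
    have h3 : β * ((1 + ε) * (A * s)) ≤ β * (ε * (x + y - ρ)) :=
      mul_le_mul_of_nonneg_left key2 hβ.le
    linarith [h2, h3]
  have hc₁vL : c₁ * v ≤ L := by linarith
  -- conclusion
  have hQup : c₂ * v ≤ (1 + ε) * L := by
    calc c₂ * v ≤ ((1 + ε) * c₁) * v := mul_le_mul_of_nonneg_right hc2c1 hv0
      _ = (1 + ε) * (c₁ * v) := by ring
      _ ≤ (1 + ε) * L := mul_le_mul_of_nonneg_left hc₁vL (by linarith)
  have hQlo : (1 - ε) * L ≤ c₂ * v := by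
    have : ε * L ≥ δ := hδεL
    linarith [hhigh]
  have hgoal : β * (x - ρ + y) * v = c₂ * v := by rw [hc₂def]; ring
  rw [abs_le]
  constructor
  · rw [le_sub_iff_add_le, hgoal]
    rw [le_div_iff₀ hLpos]
    linarith
  · rw [sub_le_iff_le_add, hgoal]
    rw [div_le_iff₀ hLpos]
    linarith
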